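/- Let κ, μ be real with μ − κ + 1/2 > 0. Then the function y(x) = W_{κ,μ}(x), defined by the integral representation, is twice differentiable on (0,∞) and satisfies Whittaker's differential equation y''(x) + ( −1/4 + κ/x + (1/4 − μ²)/x² ) y(x) = 0 for all x > 0. -/

import Mathlib

open MeasureTheory Set

/-- The Whittaker function `W_{κ,μ}(x)` given by its integral representation,
valid for `μ - κ + 1/2 > 0` and `x > 0`. -/
noncomputable def whittakerW (κ μ x : ℝ) : ℝ :=
  x ^ (μ + 1/2) / Real.Gamma (μ - κ + 1/2) *
    ∫ s in Ioi (1/2 : ℝ),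
      Real.exp (-s * x) * (s + 1/2) ^ (κ + μ - 1/2) * (s - 1/2) ^ (μ - κ - 1/2)

open Real Filter Metric
open scoped Topology

set_option maxHeartbeats 1000000

namespace WhitAux

lemma rpow_bound {p s t : ℝ} (hs : 1 ≤ s) (h1 : s/2 ≤ t) (h2 : t ≤ 2*s) :
    t ^ p ≤ 2 ^ |p| * s ^ p := by
  have hs0 : (0:ℝ) < s := by linarith
  have h2p : (1:ℝ) ≤ 2 ^ |p| := Real.one_le_rpow one_le_two (abs_nonneg p)
  rcases le_or_gt 0 p with hp | hp
  · calc t ^ p ≤ (2*s) ^ p := Real.rpow_le_rpow (by linarith) h2 hp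
      _ = 2 ^ p * s ^ p := Real.mul_rpow (by norm_num) hs0.le
      _ ≤ 2 ^ |p| * s ^ p := by
          have : (2:ℝ) ^ p ≤ 2 ^ |p| := Real.rpow_le_rpow_of_exponent_le one_le_two (le_abs_self p)
          exact mul_le_mul_of_nonneg_right this (Real.rpow_nonneg hs0.le p)
  · calc t ^ p ≤ (s/2) ^ p := Real.rpow_le_rpow_of_nonpos (by linarith) h1 hp.le
      _ = s ^ p / 2 ^ p := Real.div_rpow hs0.le (by norm_num : (0:ℝ) ≤ 2) p
      _ = 2 ^ (-p) * s ^ p := by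
          rw [Real.rpow_neg (by norm_num)]
          field_simp
      _ = 2 ^ |p| * s ^ p := by rw [abs_of_neg hp]

lemma tendstoG (p q c : ℝ) (hc : 0 < c) :
    Tendsto (fun s : ℝ => Real.exp (-(s*c)) * (s+1/2) ^ p * (s-1/2) ^ q) atTop (𝓝 0) := by
  have key : Tendsto (fun s : ℝ => (2 ^ |p| * 2 ^ |q|) * (s ^ (p+q) * Real.exp (-c * s)))
      atTop (𝓝 ((2 ^ |p| * 2 ^ |q|) * 0)) :=
    (tendsto_rpow_mul_exp_neg_mul_atTop_nhds_zero (p+q) c hc).const_mul _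
  rw [mul_zero] at key
  refine squeeze_zero' ?_ ?_ key
  · filter_upwards [eventually_ge_atTop (1:ℝ)] with s hs
    have : (0:ℝ) < s - 1/2 := by linarith
    positivity
  · filter_upwards [eventually_ge_atTop (1:ℝ)] with s hs
    have hs0 : (0:ℝ) < s := by linarith
    have hA : (s+1/2) ^ p ≤ 2 ^ |p| * s ^ p := rpow_bound hs (by linarith) (by linarith)
    have hB : (s-1/2) ^ q ≤ 2 ^ |q| * s ^ q := rpow_bound hs (by linarith) (by linarith)
    have he : (0:ℝ) < Real.exp (-(s*c)) := Real.exp_pos _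
    calc Real.exp (-(s*c)) * (s+1/2) ^ p * (s-1/2) ^ q
        ≤ Real.exp (-(s*c)) * (2 ^ |p| * s ^ p) * (2 ^ |q| * s ^ q) := by
          have h1 : (0:ℝ) ≤ (s-1/2) ^ q := Real.rpow_nonneg (by linarith) q
          have h2 : (0:ℝ) ≤ Real.exp (-(s*c)) * (2 ^ |p| * s ^ p) :=
            mul_nonneg he.le (mul_nonneg (Real.rpow_nonneg (by norm_num) _) (Real.rpow_nonneg hs0.le p))
          exact mul_le_mul (mul_le_mul_of_nonneg_left hA he.le) hB h1 h2
      _ = (2 ^ |p| * 2 ^ |q|) * (s ^ (p+q) * Real.exp (-c * s)) := by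
          rw [Real.rpow_add hs0, mul_comm s c]
          ring

lemma contOn (p q x : ℝ) :
    ContinuousOn (fun s : ℝ => Real.exp (-s*x) * (s+1/2) ^ p * (s-1/2) ^ q) (Ioi (1/2:ℝ)) := by
  have h1 : ContinuousOn (fun s : ℝ => Real.exp (-s*x)) (Ioi (1/2:ℝ)) :=
    (Real.continuous_exp.comp ((continuous_neg.mul continuous_const))).continuousOn
  have h2 : ContinuousOn (fun s : ℝ => (s+1/2) ^ p) (Ioi (1/2:ℝ)) := by
    apply ContinuousOn.rpow_const (by fun_prop)
    intro s hs
    left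
    have : (1/2:ℝ) < s := hs
    positivity
  have h3 : ContinuousOn (fun s : ℝ => (s-1/2) ^ q) (Ioi (1/2:ℝ)) := by
    apply ContinuousOn.rpow_const (by fun_prop)
    intro s hs
    left
    have : (1/2:ℝ) < s := hs
    have : (0:ℝ) < s - 1/2 := by linarith
    positivity
  exact (h1.mul h2).mul h3

lemma intG {p q x : ℝ} (hq : -1 < q) (hx : 0 < x) :
    IntegrableOn (fun s : ℝ => Real.exp (-s*x) * (s+1/2) ^ p * (s-1/2) ^ q) (Ioi (1/2:ℝ)) := by
  have hmeas : AEStronglyMeasurable (fun s : ℝ => Real.exp (-s*x) * (s+1/2) ^ p * (s-1/2) ^ q)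
      (volume.restrict (Ioi (1/2:ℝ))) :=
    (contOn p q x).aestronglyMeasurable measurableSet_Ioi
  rw [show Ioi (1/2:ℝ) = Ioc (1/2) 1 ∪ Ioi 1 from (Ioc_union_Ioi_eq_Ioi (by norm_num)).symm]
  refine IntegrableOn.union ?_ ?_
  · -- on Ioc (1/2) 1
    have hbase : IntegrableOn (fun s : ℝ => (s - 1/2) ^ q) (Ioc (1/2:ℝ) 1) := by
      have h0 : IntervalIntegrable (fun t : ℝ => t ^ q) volume 0 (1/2) :=
        intervalIntegral.intervalIntegrable_rpow' hq
      have h1 := h0.comp_sub_right (1/2)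
      norm_num at h1
      exact (intervalIntegrable_iff_integrableOn_Ioc_of_le (by norm_num)).mp h1
    refine Integrable.mono' (hbase.const_mul ((3/2:ℝ) ^ p + 1))
      (hmeas.mono_measure (Measure.restrict_mono Ioc_subset_Ioi_self le_rfl)) ?_
    rw [ae_restrict_iff' measurableSet_Ioc]
    filter_upwards with s hs
    obtain ⟨hs1, hs2⟩ := hs
    have hsub : (0:ℝ) < s - 1/2 := by linarith
    have hexp : Real.exp (-s*x) ≤ 1 := by
      rw [Real.exp_le_one_iff]
      nlinarith
    have hA : (s+1/2) ^ p ≤ (3/2:ℝ) ^ p + 1 := by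
      rcases le_or_gt 0 p with hp | hp
      · have : (s+1/2) ^ p ≤ (3/2:ℝ) ^ p := Real.rpow_le_rpow (by linarith) (by linarith) hp
        have h2 : (0:ℝ) < (3/2:ℝ) ^ p := Real.rpow_pos_of_pos (by norm_num) p
        linarith
      · have : (s+1/2) ^ p ≤ 1 := Real.rpow_le_one_of_one_le_of_nonpos (by linarith) hp.le
        have h2 : (0:ℝ) < (3/2:ℝ) ^ p := Real.rpow_pos_of_pos (by norm_num) p
        linarith
    have hBn : (0:ℝ) ≤ (s-1/2) ^ q := Real.rpow_nonneg hsub.le q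
    have hAn : (0:ℝ) ≤ (s+1/2) ^ p := Real.rpow_nonneg (by linarith) p
    rw [Real.norm_eq_abs, abs_of_nonneg (by positivity)]
    calc Real.exp (-s*x) * (s+1/2) ^ p * (s-1/2) ^ q
        ≤ 1 * ((3/2:ℝ) ^ p + 1) * (s-1/2) ^ q := by
          apply mul_le_mul_of_nonneg_right _ hBn
          exact mul_le_mul hexp hA hAn (by norm_num)
      _ = ((3/2:ℝ) ^ p + 1) * (s-1/2) ^ q := by ring
  · -- on Ioi 1
    refine integrable_of_isBigO_exp_neg (b := x/2) (by linarith) ?_ ?_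
    · exact (contOn p q x).mono fun s hs => by
        simp only [mem_Ici] at hs; exact mem_Ioi.mpr (by linarith)
    · rw [Asymptotics.isBigO_iff]
      refine ⟨1, ?_⟩
      have ht := tendstoG p q (x/2) (by linarith)
      have hev := (ht.eventually (eventually_le_nhds (show (0:ℝ) < 1 by norm_num)))
      filter_upwards [hev, eventually_ge_atTop (1:ℝ)] with s hle hs1
      have hsub : (0:ℝ) < s - 1/2 := by linarith
      have key : Real.exp (-s*x) * (s+1/2) ^ p * (s-1/2) ^ q
          ≤ Real.exp (-(x/2)*s) := by
        have : Real.exp (-s*x) = Real.exp (-(s*(x/2))) * Real.exp (-(x/2)*s) := by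
          rw [← Real.exp_add]; ring_nf
        rw [this]
        have h2 : Real.exp (-(s*(x/2))) * (s+1/2) ^ p * (s-1/2) ^ q ≤ 1 := hle
        have hepos : (0:ℝ) < Real.exp (-(x/2)*s) := Real.exp_pos _
        nlinarith [Real.rpow_nonneg (show (0:ℝ) ≤ s+1/2 by linarith) p,
          Real.rpow_nonneg hsub.le q, Real.exp_pos (-(s*(x/2)))]
      rw [Real.norm_eq_abs, Real.norm_eq_abs, abs_of_nonneg, abs_of_nonneg (Real.exp_pos _).le,
        one_mul]
      · exact key
      · have : (0:ℝ) ≤ (s-1/2) ^ q := Real.rpow_nonneg hsub.le q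
        positivity

lemma intGn (n : ℕ) {p q x : ℝ} (hq : -1 < q) (hx : 0 < x) :
    IntegrableOn (fun s : ℝ => s^n * (Real.exp (-s*x) * (s+1/2) ^ p * (s-1/2) ^ q))
      (Ioi (1/2:ℝ)) := by
  have hmeas : AEStronglyMeasurable
      (fun s : ℝ => s^n * (Real.exp (-s*x) * (s+1/2) ^ p * (s-1/2) ^ q))
      (volume.restrict (Ioi (1/2:ℝ))) :=
    ((continuous_pow n).continuousOn.mul (contOn p q x)).aestronglyMeasurable measurableSet_Ioi
  refine Integrable.mono' (intG (p := p + n) hq hx) hmeas ?_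
  rw [ae_restrict_iff' measurableSet_Ioi]
  filter_upwards with s hs
  have hs2 : (1/2:ℝ) < s := hs
  have hsub : (0:ℝ) < s - 1/2 := by linarith
  have hAn : (0:ℝ) ≤ (s+1/2) ^ p := Real.rpow_nonneg (by linarith) p
  have hBn : (0:ℝ) ≤ (s-1/2) ^ q := Real.rpow_nonneg hsub.le q
  have hpow : s^n ≤ (s+1/2) ^ (n:ℝ) := by
    rw [Real.rpow_natCast]
    exact pow_le_pow_left₀ (by linarith) (by linarith) n
  rw [Real.norm_eq_abs, abs_of_nonneg (by positivity)]
  calc s^n * (Real.exp (-s*x) * (s+1/2) ^ p * (s-1/2) ^ q)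
      ≤ (s+1/2) ^ (n:ℝ) * (Real.exp (-s*x) * (s+1/2) ^ p * (s-1/2) ^ q) := by
        apply mul_le_mul_of_nonneg_right hpow
        positivity
    _ = Real.exp (-s*x) * (s+1/2) ^ (p + n) * (s-1/2) ^ q := by
        rw [Real.rpow_add (by linarith : (0:ℝ) < s + 1/2)]
        ring

noncomputable def K (p q : ℝ) (n : ℕ) (x : ℝ) : ℝ :=
  ∫ s in Ioi (1/2:ℝ), s^n * (Real.exp (-s*x) * (s+1/2) ^ p * (s-1/2) ^ q)

lemma hasDerivAt_K (p q : ℝ) (hq : -1 < q) (n : ℕ) {x : ℝ} (hx : 0 < x) :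
    HasDerivAt (K p q n) (-(K p q (n+1) x)) x := by
  have hder := hasDerivAt_integral_of_dominated_loc_of_deriv_le
    (F := fun y s => s^n * (Real.exp (-s*y) * (s+1/2) ^ p * (s-1/2) ^ q))
    (F' := fun y s => -(s^(n+1) * (Real.exp (-s*y) * (s+1/2) ^ p * (s-1/2) ^ q)))
    (x₀ := x) (s := ball x (x/2))
    (bound := fun s => s^(n+1) * (Real.exp (-s*(x/2)) * (s+1/2) ^ p * (s-1/2) ^ q))
    (ball_mem_nhds x (by linarith))
    (Eventually.of_forall fun y =>
      ((continuous_pow n).continuousOn.mul (contOn p q y)).aestronglyMeasurable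
        measurableSet_Ioi)
    (intGn n hq hx)
    (((continuous_pow (n+1)).continuousOn.mul (contOn p q x)).neg.aestronglyMeasurable
      measurableSet_Ioi)
    ?_ (intGn (n+1) hq (by linarith)) ?_
  · rcases hder with ⟨-, hd⟩
    have : (∫ s in Ioi (1/2:ℝ),
        -(s^(n+1) * (Real.exp (-s*x) * (s+1/2) ^ p * (s-1/2) ^ q))) = -(K p q (n+1) x) := by
      rw [integral_neg]; rfl
    rw [this] at hd
    exact hd
  · rw [ae_restrict_iff' measurableSet_Ioi]
    filter_upwards with s hs y hy
    have hs2 : (1/2:ℝ) < s := hs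
    have hsub : (0:ℝ) < s - 1/2 := by linarith
    have hy2 : x/2 < y := by
      have := abs_lt.mp (mem_ball_iff_norm.mp hy)
      linarith [this.1]
    have hexp : Real.exp (-s*y) ≤ Real.exp (-s*(x/2)) := by
      apply Real.exp_le_exp.mpr
      nlinarith
    have hAn : (0:ℝ) ≤ (s+1/2) ^ p := Real.rpow_nonneg (by linarith) p
    have hBn : (0:ℝ) ≤ (s-1/2) ^ q := Real.rpow_nonneg hsub.le q
    rw [norm_neg, Real.norm_eq_abs, abs_of_nonneg (by positivity)]
    have hsn : (0:ℝ) ≤ s^(n+1) := by positivity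
    apply mul_le_mul_of_nonneg_left _ hsn
    apply mul_le_mul_of_nonneg_right _ hBn
    exact mul_le_mul_of_nonneg_right hexp hAn
  · rw [ae_restrict_iff' measurableSet_Ioi]
    filter_upwards with s hs y hy
    have h1 : HasDerivAt (fun y : ℝ => Real.exp (-s*y)) (Real.exp (-s*y) * (-s * 1)) y :=
      ((hasDerivAt_id y).const_mul (-s)).exp
    have h2 := (((h1.mul_const ((s+1/2) ^ p)).mul_const ((s-1/2) ^ q)).const_mul (s^n))
    exact h2.congr_deriv (by ring)

lemma keyIBP {p q x : ℝ} (hq : -1 < q) (hx : 0 < x) :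
    (p+q+2) * K p q 1 x + ((q-p)/2 + x/4) * K p q 0 x - x * K p q 2 x = 0 := by
  set G : ℝ → ℝ := fun s => Real.exp (-s*x) * (s+1/2) ^ p * (s-1/2) ^ q with hG
  set F : ℝ → ℝ := fun s => Real.exp (-s*x) * ((s+1/2) ^ (p+1) * (s-1/2) ^ (q+1)) with hF
  set f' : ℝ → ℝ := fun s =>
    G s * ((p+q+2)*s + (q-p)/2 - x*(s^2-1/4)) with hf'
  have hq1 : (0:ℝ) < q + 1 := by linarith
  -- derivative of F on Ioi (1/2)
  have hderiv : ∀ s ∈ Ioi (1/2:ℝ), HasDerivAt F (f' s) s := by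
    intro s hs
    have hs2 : (1/2:ℝ) < s := hs
    have hsub : (0:ℝ) < s - 1/2 := by linarith
    have hadd : (0:ℝ) < s + 1/2 := by linarith
    have h_e : HasDerivAt (fun s : ℝ => Real.exp (-s*x)) (Real.exp (-s*x) * (-1 * x)) s :=
      (((hasDerivAt_id s).neg.mul_const x)).exp
    have h_A : HasDerivAt (fun s : ℝ => (s+1/2) ^ (p+1)) ((p+1) * (s+1/2) ^ (p+1-1) * 1) s :=
      (Real.hasDerivAt_rpow_const (Or.inl hadd.ne')).comp (h₂ := fun x : ℝ => x ^ (p+1)) s ((hasDerivAt_id s).add_const (1/2))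
    have h_B : HasDerivAt (fun s : ℝ => (s-1/2) ^ (q+1)) ((q+1) * (s-1/2) ^ (q+1-1) * 1) s :=
      (Real.hasDerivAt_rpow_const (Or.inl hsub.ne')).comp (h₂ := fun x : ℝ => x ^ (q+1)) s ((hasDerivAt_id s).sub_const (1/2))
    have h := h_e.mul (h_A.mul h_B)
    refine h.congr_deriv ?_
    have e1 : (s+1/2) ^ (p+1) = (s+1/2) ^ p * (s+1/2) := by
      rw [Real.rpow_add hadd, Real.rpow_one]
    have e2 : (s-1/2) ^ (q+1) = (s-1/2) ^ q * (s-1/2) := by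
      rw [Real.rpow_add hsub, Real.rpow_one]
    have e3 : p + 1 - 1 = p := by ring
    have e4 : q + 1 - 1 = q := by ring
    rw [e3, e4] at *
    simp only [hf', hG, e1, e2, Pi.mul_apply]
    ring
  -- continuity at the left endpoint
  have hcont : ContinuousWithinAt F (Ici (1/2:ℝ)) (1/2:ℝ) := by
    apply ContinuousAt.continuousWithinAt
    apply ContinuousAt.mul
    · exact (Real.continuous_exp.comp ((continuous_neg.mul continuous_const))).continuousAt
    · apply ContinuousAt.mul
      · apply ContinuousAt.rpow_const
        · exact (continuous_id.add continuous_const).continuousAt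
        · left; norm_num
      · apply ContinuousAt.rpow_const
        · exact (continuous_id.sub continuous_const).continuousAt
        · right; linarith
  -- limit at infinity
  have htop : Tendsto F atTop (𝓝 0) := by
    apply (tendstoG (p+1) (q+1) x hx).congr
    intro s
    simp only [hF]
    rw [mul_assoc, ← neg_mul]
  -- decomposition of f'
  have hfun : f' = fun s : ℝ =>
      (p+q+2) * (s^1 * G s) + ((q-p)/2 + x/4) * (s^0 * G s) - x * (s^2 * G s) := by
    funext s
    simp only [hf']
    ring
  have i1 : IntegrableOn (fun s : ℝ => s^1 * G s) (Ioi (1/2:ℝ)) := intGn 1 hq hx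
  have i0 : IntegrableOn (fun s : ℝ => s^0 * G s) (Ioi (1/2:ℝ)) := intGn 0 hq hx
  have i2 : IntegrableOn (fun s : ℝ => s^2 * G s) (Ioi (1/2:ℝ)) := intGn 2 hq hx
  have iadd : IntegrableOn (fun s : ℝ =>
      (p+q+2) * (s^1 * G s) + ((q-p)/2 + x/4) * (s^0 * G s)) (Ioi (1/2:ℝ)) :=
    (i1.const_mul _).add (i0.const_mul _)
  have isub : IntegrableOn (fun s : ℝ =>
      (p+q+2) * (s^1 * G s) + ((q-p)/2 + x/4) * (s^0 * G s) - x * (s^2 * G s)) (Ioi (1/2:ℝ)) :=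
    iadd.sub (i2.const_mul _)
  have f'int : IntegrableOn f' (Ioi (1/2:ℝ)) := by
    rw [hfun]; exact isub
  have hIBP := integral_Ioi_of_hasDerivAt_of_tendsto hcont hderiv f'int htop
  have hF0 : F (1/2) = 0 := by
    simp only [hF]
    rw [show (1/2:ℝ) - 1/2 = 0 by norm_num, Real.zero_rpow (by linarith : q + 1 ≠ 0)]
    ring
  rw [hF0, sub_zero] at hIBP
  have hsplit : ∫ s in Ioi (1/2:ℝ), f' s
      = (p+q+2) * K p q 1 x + ((q-p)/2 + x/4) * K p q 0 x - x * K p q 2 x := by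
    rw [hfun]
    rw [integral_sub iadd (i2.const_mul _), integral_add (i1.const_mul _) (i0.const_mul _),
      integral_const_mul, integral_const_mul, integral_const_mul]
    rfl
  rw [hsplit] at hIBP
  exact hIBP

end WhitAux

/-- `W_{κ,μ}` is twice differentiable on `(0,∞)` and satisfies Whittaker's
differential equation `y'' + (-1/4 + κ/x + (1/4 - μ²)/x²) y = 0`. -/
theorem stmt_8 (κ μ : ℝ) (h : μ - κ + 1/2 > 0) :
    (∀ x > (0:ℝ), DifferentiableAt ℝ (whittakerW κ μ) x) ∧
    (∀ x > (0:ℝ), DifferentiableAt ℝ (deriv (whittakerW κ μ)) x) ∧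
    ∀ x > (0:ℝ),
      deriv (deriv (whittakerW κ μ)) x +
        (-(1/4) + κ / x + (1/4 - μ ^ 2) / x ^ 2) * whittakerW κ μ x = 0 := by
  have hb : (-1:ℝ) < μ - κ - 1/2 := by linarith
  set c := (Real.Gamma (μ - κ + 1/2))⁻¹ with hc
  have hW : whittakerW κ μ = fun y =>
      c * (y ^ (μ+1/2) * WhitAux.K (κ+μ-1/2) (μ-κ-1/2) 0 y) := by
    funext y
    have hK0 : WhitAux.K (κ+μ-1/2) (μ-κ-1/2) 0 y
        = ∫ s in Ioi (1/2:ℝ), Real.exp (-s*y) * (s+1/2) ^ (κ+μ-1/2) * (s-1/2) ^ (μ-κ-1/2) := by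
      unfold WhitAux.K
      simp only [pow_zero, one_mul]
    simp only [whittakerW, hK0, hc]
    ring
  set D : ℝ → ℝ := fun y =>
    c * ((μ+1/2) * y ^ (μ+1/2-1) * WhitAux.K (κ+μ-1/2) (μ-κ-1/2) 0 y
      + y ^ (μ+1/2) * -(WhitAux.K (κ+μ-1/2) (μ-κ-1/2) 1 y)) with hD
  have hD1 : ∀ y : ℝ, 0 < y → HasDerivAt (whittakerW κ μ) (D y) y := by
    intro y hy
    rw [hW, hD]
    exact ((Real.hasDerivAt_rpow_const (Or.inl hy.ne')).mul
      (WhitAux.hasDerivAt_K _ _ hb 0 hy)).const_mul c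
  have hD2 : ∀ y : ℝ, 0 < y → HasDerivAt D
      (c * (((μ+1/2) * ((μ+1/2-1) * y ^ (μ+1/2-1-1)) * WhitAux.K (κ+μ-1/2) (μ-κ-1/2) 0 y
          + (μ+1/2) * y ^ (μ+1/2-1) * -(WhitAux.K (κ+μ-1/2) (μ-κ-1/2) 1 y))
        + ((μ+1/2) * y ^ (μ+1/2-1) * -(WhitAux.K (κ+μ-1/2) (μ-κ-1/2) 1 y)
          + y ^ (μ+1/2) * - -(WhitAux.K (κ+μ-1/2) (μ-κ-1/2) 2 y)))) y := by
    intro y hy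
    have h1 : HasDerivAt (fun t : ℝ => t ^ (μ+1/2-1)) ((μ+1/2-1) * y ^ (μ+1/2-1-1)) y :=
      Real.hasDerivAt_rpow_const (Or.inl hy.ne')
    exact (((h1.const_mul (μ+1/2)).mul (WhitAux.hasDerivAt_K _ _ hb 0 hy)).add
      (((Real.hasDerivAt_rpow_const (Or.inl hy.ne')).mul
        (WhitAux.hasDerivAt_K _ _ hb 1 hy).neg))).const_mul c
  refine ⟨fun x hx => (hD1 x hx).differentiableAt, ?_, ?_⟩
  · intro x hx
    have hEq : deriv (whittakerW κ μ) =ᶠ[𝓝 x] D := by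
      filter_upwards [isOpen_Ioi.mem_nhds hx] with y hy
      exact (hD1 y hy).deriv
    exact (hD2 x hx).differentiableAt.congr_of_eventuallyEq hEq
  · intro x hx
    have hEq : deriv (whittakerW κ μ) =ᶠ[𝓝 x] D := by
      filter_upwards [isOpen_Ioi.mem_nhds hx] with y hy
      exact (hD1 y hy).deriv
    have key := WhitAux.keyIBP (p := κ+μ-1/2) (q := μ-κ-1/2) hb hx
    have e1 : x ^ (μ+1/2-1) = x ^ (μ+1/2) * x⁻¹ := by
      rw [show μ+1/2-1 = (μ+1/2) + (-1) by ring, Real.rpow_add hx, Real.rpow_neg_one]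
    have e2 : x ^ (μ+1/2-1-1) = x ^ (μ+1/2) * x⁻¹ * x⁻¹ := by
      rw [show μ+1/2-1-1 = (μ+1/2-1) + (-1) by ring, Real.rpow_add hx, Real.rpow_neg_one, e1]
    rw [hEq.deriv_eq, (hD2 x hx).deriv]
    simp only [hW]
    rw [e2, e1]
    have hinv : x * x⁻¹ = 1 := mul_inv_cancel₀ hx.ne'
    linear_combination (-(c * x ^ (μ+1/2) * x⁻¹)) * key
      - (c * x ^ (μ+1/2) * (WhitAux.K (κ+μ-1/2) (μ-κ-1/2) 2 x
          - WhitAux.K (κ+μ-1/2) (μ-κ-1/2) 0 x / 4)) * hinv
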